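/- arXiv:2411.09804 — 2 statements merged into one kernel-verified Lean document; each statement's English description precedes it below -/
import Mathlib

section
/- Suppose for every vector v in a set V ⊆ R^N, the constant vector v̄·1 (where v̄ = (1/N)∑_n v_n) also belongs to V. Then for any weight vector w in the simplex with nonincreasing entries, sup_{v ∈ V} GGF_w[v] = sup_{v ∈ V} GGF_{1/N}[v]; i.e., optimizing the Gini welfare over V reduces to optimizing the utilitarian (average) objective over V. -/
open Finset

noncomputable def GGF {N : ℕ} (w v : Fin N → ℝ) : ℝ :=
  Finset.univ.inf' Finset.univ_nonempty
    (fun σ : Equiv.Perm (Fin N) => ∑ n, w n * v (σ n))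

lemma GGF_le_avg {N : ℕ} (hN : 0 < N) (w v : Fin N → ℝ)
    (hsum : ∑ n, w n = 1) (hanti : ∀ i j : Fin N, i ≤ j → w j ≤ w i) :
    GGF w v ≤ (1 / N : ℝ) * ∑ n, v n := by
  have : Nonempty (Fin N) := ⟨⟨0, hN⟩⟩
  set σ := Tuple.sort v with hσ
  have hmono : Monotone (v ∘ σ) := Tuple.monotone_sort v
  have hav : Antivary w (v ∘ σ) := by
    intro i j hij
    rcases le_total i j with h | h
    · exact hanti i j h
    · exact absurd (hmono h) (not_le.mpr hij)
  have key := hav.card_mul_sum_le_sum_mul_sum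
  simp only [Finset.card_univ, Fintype.card_fin] at key
  have hsumv : ∑ i, v (σ i) = ∑ n, v n := Equiv.sum_comp σ v
  have hle : ∑ n, w n * v (σ n) ≤ (1 / N : ℝ) * ∑ n, v n := by
    rw [div_mul_eq_mul_div, one_mul, le_div_iff₀ (by exact_mod_cast hN)]
    calc (∑ n, w n * v (σ n)) * N = (N : ℝ) * ∑ n, w n * (v ∘ σ) n := by
          simp [Function.comp]; ring
      _ ≤ (∑ n, w n) * ∑ n, (v ∘ σ) n := key
      _ = ∑ n, v n := by rw [hsum, one_mul]; exact hsumv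
  exact le_trans (Finset.inf'_le _ (Finset.mem_univ σ)) hle

lemma GGF_const {N : ℕ} (w : Fin N → ℝ) (hsum : ∑ n, w n = 1) (c : ℝ) :
    GGF w (fun _ => c) = c := by
  unfold GGF
  simp only [← Finset.sum_mul, hsum, one_mul]
  exact Finset.inf'_const _ c

theorem stmt10 {N : ℕ} (hN : 0 < N) (V : Set (Fin N → ℝ)) (hne : V.Nonempty)
    (hcl : ∀ v ∈ V, (fun _ : Fin N => (1 / N : ℝ) * ∑ n, v n) ∈ V)
    (w : Fin N → ℝ) (hw : ∀ n, 0 ≤ w n) (hsum : ∑ n, w n = 1)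
    (hanti : ∀ i j : Fin N, i ≤ j → w j ≤ w i) :
    sSup (GGF w '' V) = sSup ((fun v => (1 / N : ℝ) * ∑ n, v n) '' V) := by
  apply csSup_eq_csSup_of_forall_exists_le
  · rintro x ⟨v, hv, rfl⟩
    exact ⟨(1 / N : ℝ) * ∑ n, v n, ⟨v, hv, rfl⟩, GGF_le_avg hN w v hsum hanti⟩
  · rintro y ⟨v, hv, rfl⟩
    refine ⟨GGF w (fun _ : Fin N => (1 / N : ℝ) * ∑ n, v n), ⟨_, hcl v hv, rfl⟩, ?_⟩
    rw [GGF_const w hsum]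
end

section
/- Under the same averaging-closure hypothesis on V, any maximizer v* of the utilitarian objective GGF_{1/N} over V whose constant-average version v̄*·1 lies in V satisfies: v̄*·1 attains the maximum of GGF_w over V for every weight vector w in the simplex simultaneously. -/
open Finset

theorem stmt11 {N : ℕ} (hN : 0 < N) (V : Set (Fin N → ℝ)) (hne : V.Nonempty)
    (hcl : ∀ v ∈ V, (fun _ : Fin N => (1 / N : ℝ) * ∑ n, v n) ∈ V)
    (vstar : Fin N → ℝ) (hmem : vstar ∈ V)
    (hopt : ∀ v ∈ V, (1 / N : ℝ) * ∑ n, v n ≤ (1 / N : ℝ) * ∑ n, vstar n) :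
    ∀ w : Fin N → ℝ, (∀ n, 0 ≤ w n) → ∑ n, w n = 1 →
      (fun _ : Fin N => (1 / N : ℝ) * ∑ n, vstar n) ∈ V ∧
      ∀ v ∈ V, GGF w v ≤ GGF w (fun _ : Fin N => (1 / N : ℝ) * ∑ n, vstar n) := by
  haveI : NeZero N := ⟨hN.ne'⟩
  intro w hw hw1
  refine ⟨hcl vstar hmem, ?_⟩
  intro v hv
  set c : ℝ := (1 / N : ℝ) * ∑ n, vstar n with hc
  have hconst : GGF w (fun _ : Fin N => c) = c := by
    have : (fun σ : Equiv.Perm (Fin N) => ∑ n, w n * c) = fun _ => c := by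
      funext σ
      rw [← Finset.sum_mul, hw1, one_mul]
    unfold GGF
    rw [this, Finset.inf'_const]
  rw [hconst]
  -- key: there is a rotation σ with objective ≤ average
  have hsum : ∑ j : Fin N, ∑ n, w n * v ((Equiv.addLeft j) n) = ∑ k, v k := by
    rw [Finset.sum_comm]
    have : ∀ n : Fin N, ∑ j : Fin N, w n * v ((Equiv.addLeft j) n) = w n * ∑ k, v k := by
      intro n
      rw [← Finset.mul_sum]
      congr 1
      exact Fintype.sum_equiv (Equiv.addRight n) _ _ (fun j => by simp [add_comm])
    simp_rw [this]
    rw [← Finset.sum_mul, hw1, one_mul]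
  have havg : ∃ j : Fin N, ∑ n, w n * v ((Equiv.addLeft j) n) ≤ (1 / N : ℝ) * ∑ k, v k := by
    by_contra h
    push_neg at h
    have : ∑ j : Fin N, (1 / N : ℝ) * ∑ k, v k < ∑ j : Fin N, ∑ n, w n * v ((Equiv.addLeft j) n) :=
      Finset.sum_lt_sum_of_nonempty Finset.univ_nonempty (fun j _ => h j)
    rw [hsum, Finset.sum_const, Finset.card_univ, Fintype.card_fin, nsmul_eq_mul] at this
    have hN' : (N : ℝ) ≠ 0 := Nat.cast_ne_zero.mpr hN.ne'
    rw [← mul_assoc, mul_one_div, div_self hN', one_mul] at this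
    exact lt_irrefl _ this
  obtain ⟨j, hj⟩ := havg
  have h1 : GGF w v ≤ ∑ n, w n * v ((Equiv.addLeft j) n) :=
    Finset.inf'_le _ (Finset.mem_univ _)
  exact h1.trans (hj.trans (hopt v hv))
end
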